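/- Setting u_{2n-1} = (H^0_{n-1} H^1_n)/(H^0_n H^1_{n-1}) and u_{2n} = (H^0_{n+1} H^1_{n-1})/(H^0_n H^1_n) for a sequence c with all relevant Hankel determinants nonzero, the telescoping identity G^m_n/H^m_n − G^m_{n-1}/H^m_{n-1} = u_{2n-2+m} + u_{2n-1+m} holds for m ∈ {0,1} and n ≥ 1, with conventions G^0_0 = −u₀, G^1_0 = 0, H^m_0 = 1, u₀ arbitrary. -/

import Mathlib

/-- Hankel determinant `H^m_n = det(c_{i+j+m})`. -/
noncomputable def Hk (c : ℕ → ℝ) (m n : ℕ) : ℝ :=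
  (Matrix.of fun i j : Fin n => c (i.val + j.val + m)).det

/-- `G^m_n`: the Hankel determinant `H^m_n` with its last row
`(c_{m+n-1},…,c_{m+2n-2})` replaced by `(c_{m+n},…,c_{m+2n-1})`;
by convention `G^m_0 = 0`. -/
noncomputable def Gk (c : ℕ → ℝ) (m n : ℕ) : ℝ :=
  if n = 0 then 0 else
  (Matrix.of fun i j : Fin n =>
    if i.val = n - 1 then c (m + n + j.val) else c (i.val + j.val + m)).det

/-- `E^m_n`: determinant of the `n×n` matrix with rows
`(c_{m+k},…,c_{m+k+n-2}, c_{m+k+n+1})`, i.e. the last column advanced by 2. -/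
noncomputable def Ek (c : ℕ → ℝ) (m n : ℕ) : ℝ :=
  (Matrix.of fun i j : Fin n =>
    if j.val = n - 1 then c (m + i.val + n + 1) else c (m + i.val + j.val)).det

/-- `F^m_n`: determinant of the `n×n` matrix with rows
`(c_{m+k},…,c_{m+k+n-3}, c_{m+k+n-1}, c_{m+k+n})`, i.e. column `n−2` skipped;
by convention `F^m_1 = 0`. -/
noncomputable def Fk (c : ℕ → ℝ) (m n : ℕ) : ℝ :=
  if n = 1 then 0 else
  (Matrix.of fun i j : Fin n =>
    if n - 2 ≤ j.val then c (m + i.val + j.val + 1) else c (m + i.val + j.val)).det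

/-- `S^m_n`: determinant of `(c_{m+σ(i)+σ(j)})` where `σ(i) = i` for `i ≤ n−2`
and `σ(n−1) = n`. -/
noncomputable def Sk (c : ℕ → ℝ) (m n : ℕ) : ℝ :=
  (Matrix.of fun i j : Fin n =>
    c (m + (if i.val = n - 1 then n else i.val) +
        (if j.val = n - 1 then n else j.val))).det

/-- `G^m_n` with the extended conventions `G⁰_0 = −u₀`, `G¹_0 = 0`. -/
noncomputable def Gext (c : ℕ → ℝ) (u₀ : ℝ) (m n : ℕ) : ℝ :=
  if n = 0 then (if m = 0 then -u₀ else 0) else Gk c m n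

open Matrix Finset

lemma val_succAbove {M : ℕ} (t : Fin (M+1)) (k : Fin M) :
    ((t.succAbove k) : ℕ) = if (k:ℕ) < (t:ℕ) then (k:ℕ) else (k:ℕ)+1 := by
  rw [Fin.succAbove]
  split
  · next h => simp [Fin.lt_def] at h; simp [h]
  · next h => simp [Fin.lt_def] at h; simp [Nat.not_lt.2 h]

lemma key (M : ℕ) (w : Fin (M+2) → Fin (M+1) → ℝ) (S : Fin (M+1) → Fin (M+1) → ℝ) :
    ∑ t : Fin (M+2), (-1:ℝ)^(t:ℕ) * (Matrix.of fun k j => w (t.succAbove k) j).det *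
      ((Matrix.of S).updateRow (Fin.last M) (w t)).det = 0 := by
  classical
  set A := (Matrix.of S) with hA
  set D : Fin (M+2) → ℝ := fun t => (Matrix.of fun k j => w (t.succAbove k) j).det with hD
  have hz : ∀ r : Fin (M+1), ∑ t : Fin (M+2), ((-1:ℝ)^(t:ℕ) * D t) * w t r = 0 := by
    intro r
    have h0 : (Matrix.of fun (i : Fin (M+2)) (t : Fin (M+2)) =>
        w t (Fin.cases r (fun i' => i') i)).det = 0 := by
      apply Matrix.det_zero_of_row_eq (i := (0 : Fin (M+2))) (j := r.succ)
        (Fin.succ_ne_zero r).symm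
      funext t; simp
    rw [Matrix.det_succ_row_zero] at h0
    rw [← h0]
    apply Finset.sum_congr rfl
    intro t _
    have hsub : ((Matrix.of fun (i : Fin (M+2)) (t : Fin (M+2)) =>
        w t (Fin.cases r (fun i' => i') i)).submatrix Fin.succ t.succAbove)
        = (Matrix.of fun k j => w (t.succAbove k) j)ᵀ := by
      ext k l
      simp [Matrix.submatrix, Matrix.transpose]
    rw [hsub, Matrix.det_transpose]
    simp [hD]
    ring
  let L : (Fin (M+1) → ℝ) →ₗ[ℝ] ℝ :=
    { toFun := fun x => (A.updateRow (Fin.last M) x).det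
      map_add' := fun x y => Matrix.det_updateRow_add A _ x y
      map_smul' := fun s x => Matrix.det_updateRow_smul A _ s x }
  have hL : ∀ x, L x = (A.updateRow (Fin.last M) x).det := fun _ => rfl
  calc ∑ t : Fin (M+2), (-1:ℝ)^(t:ℕ) * D t * (A.updateRow (Fin.last M) (w t)).det
      = ∑ t : Fin (M+2), L (((-1:ℝ)^(t:ℕ) * D t) • w t) := by
        apply Finset.sum_congr rfl; intro t _
        rw [_root_.map_smul, smul_eq_mul, hL]
    _ = L (∑ t : Fin (M+2), ((-1:ℝ)^(t:ℕ) * D t) • w t) := (map_sum L _ _).symm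
    _ = 0 := by
        have : (∑ t : Fin (M+2), ((-1:ℝ)^(t:ℕ) * D t) • w t) = 0 := by
          funext r
          have := hz r
          simpa [Finset.sum_apply] using this
        rw [this, hL]
        exact Matrix.det_eq_zero_of_row_eq_zero (Fin.last M) (by simp)

lemma det_unit_row {M : ℕ} (A : Matrix (Fin (M+1)) (Fin (M+1)) ℝ) (k : Fin (M+1))
    (h : ∀ j, A (Fin.last M) j = if j = k then 1 else 0) :
    A.det = (-1:ℝ)^(M + (k:ℕ)) * (A.submatrix Fin.castSucc k.succAbove).det := by
  rw [Matrix.det_succ_row A (Fin.last M)]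
  rw [Finset.sum_eq_single k]
  · rw [h k]; simp [Fin.succAbove_last]
  · intro j _ hj; rw [h j]; simp [hj]
  · intro hk; simp at hk

lemma det_rotate {M : ℕ} (B : Matrix (Fin (M+1)) (Fin (M+1)) ℝ) :
    (Matrix.of fun i j => B (finRotate (M+1) i) j).det = (-1:ℝ)^M * B.det := by
  have : (Matrix.of fun i j => B (finRotate (M+1) i) j) = B.submatrix (finRotate (M+1)) id := by
    ext i j; simp [Matrix.submatrix]
  rw [this, Matrix.det_permute, sign_finRotate]
  norm_num

lemma relA (c : ℕ → ℝ) (m : ℕ) :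
    Gk c 1 (m+1) * Hk c 0 (m+1) - Gk c 0 (m+1) * Hk c 1 (m+1) = Hk c 0 (m+2) * Hk c 1 m := by
  classical
  set w : Fin (m+3) → Fin (m+2) → ℝ := fun t i =>
    if (t:ℕ) ≤ m then c ((i:ℕ) + (t:ℕ))
    else if (t:ℕ) = m+1 then (if (i:ℕ) = m then 1 else 0)
    else (if (i:ℕ) = m+1 then 1 else 0) with hw
  set Sm : Fin (m+2) → Fin (m+2) → ℝ := fun k i => c ((i:ℕ) + (k:ℕ) + 1) with hS
  have hkey := key (m+1) w Sm
  set f : Fin (m+3) → ℝ := fun t =>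
    (-1:ℝ)^(t:ℕ) * (Matrix.of fun k j => w (t.succAbove k) j).det *
      ((Matrix.of Sm).updateRow (Fin.last (m+1)) (w t)).det with hf
  have hkey' : ∑ t : Fin (m+3), f t = 0 := hkey
  set t1 : Fin (m+3) := ⟨m+1, by omega⟩ with ht1
  set t2 : Fin (m+3) := ⟨m+2, by omega⟩ with ht2
  have hv1 : (t1:ℕ) = m+1 := rfl
  have hv2 : (t2:ℕ) = m+2 := rfl
  have hvan : ∀ t : Fin (m+3), t ∉ ({0, t1, t2} : Finset (Fin (m+3))) → f t = 0 := by
    intro t ht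
    simp only [Finset.mem_insert, Finset.mem_singleton] at ht
    push_neg at ht
    have hval : (t:ℕ) ≠ 0 ∧ (t:ℕ) ≠ m+1 ∧ (t:ℕ) ≠ m+2 := by
      refine ⟨fun h => ht.1 ?_, fun h => ht.2.1 ?_, fun h => ht.2.2 ?_⟩ <;>
        exact Fin.ext (by simp [h, ht1, ht2])
    have h1 : 1 ≤ (t:ℕ) := by omega
    have h2 : (t:ℕ) ≤ m := by have := t.isLt; omega
    have hE : ((Matrix.of Sm).updateRow (Fin.last (m+1)) (w t)).det = 0 := by
      apply Matrix.det_zero_of_row_eq (i := (⟨(t:ℕ)-1, by omega⟩ : Fin (m+2)))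
        (j := Fin.last (m+1)) (Fin.ne_of_val_ne (by simp [Fin.val_last]; omega))
      rw [Matrix.updateRow_ne (Fin.ne_of_val_ne (by simp [Fin.val_last]; omega)),
        Matrix.updateRow_self]
      funext j
      simp only [Matrix.of_apply, hS, hw, if_pos h2]
      congr 1
      omega
    rw [hf]
    simp only [hE, mul_zero]
  have hsplit : ∑ t : Fin (m+3), f t = f 0 + f t1 + f t2 := by
    rw [← Finset.sum_subset (Finset.subset_univ ({0, t1, t2} : Finset (Fin (m+3))))
      (fun t _ ht => hvan t ht)]
    rw [Finset.sum_insert (by simp [ht1, ht2, Fin.ext_iff]), Finset.sum_insert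
      (by simp [ht1, ht2, Fin.ext_iff]), Finset.sum_singleton]
    ring
  let km : Fin (m+2) := ⟨m, by omega⟩
  have hvkm : (km:ℕ) = m := rfl
  -- D0
  have hD0 : (Matrix.of fun k j => w ((0:Fin (m+3)).succAbove k) j).det = Hk c 1 m := by
    rw [det_unit_row _ (Fin.last (m+1)) (by
      intro j
      have hj := j.isLt
      simp only [Matrix.of_apply, hw, val_succAbove, Fin.val_last, Fin.val_zero, Fin.ext_iff,
        Nat.not_lt_zero, if_false]
      try (split_ifs <;> first | rfl | omega | (exact absurd rfl ‹_›)))]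
    rw [Fin.succAbove_last]
    rw [det_unit_row _ (Fin.last m) (by
      intro j
      have hj := j.isLt
      simp only [Matrix.submatrix_apply, Matrix.of_apply, hw, val_succAbove,
        Fin.coe_castSucc, Fin.val_last, Fin.val_zero, Fin.ext_iff, Nat.not_lt_zero, if_false]
      try (split_ifs <;> first | rfl | omega | (exact absurd rfl ‹_›)))]
    rw [Fin.succAbove_last]
    have hmat : (((Matrix.of fun k j => w ((0:Fin (m+3)).succAbove k) j).submatrix
        Fin.castSucc Fin.castSucc).submatrix Fin.castSucc Fin.castSucc)
        = Matrix.of (fun i j : Fin m => c (i.val + j.val + 1)) := by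
      ext k j
      have hk := k.isLt
      have hj := j.isLt
      simp only [Matrix.submatrix_apply, Matrix.of_apply, hw, val_succAbove,
        Fin.coe_castSucc, Fin.val_zero, Nat.not_lt_zero, if_false]
      try (split_ifs <;> first | rfl | omega | (congr 1; omega) | (exact absurd rfl ‹_›))
    rw [hmat]
    have hev : ∀ k : ℕ, (-1:ℝ)^(k+k) = 1 := by
      intro k; rw [show k+k = 2*k by ring, pow_mul]; norm_num
    simp only [Fin.val_last, hev, one_mul]
    rfl
  -- E0
  have hE0 : ((Matrix.of Sm).updateRow (Fin.last (m+1)) (w 0)).det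
      = (-1:ℝ)^(m+1) * Hk c 0 (m+2) := by
    have hmat : (Matrix.of Sm).updateRow (Fin.last (m+1)) (w 0)
        = Matrix.of (fun i j => (Matrix.of fun a b : Fin (m+2) => c (a.val + b.val + 0))
            (finRotate (m+2) i) j) := by
      ext i j
      by_cases hi : i = Fin.last (m+1)
      · subst hi
        rw [Matrix.updateRow_self]
        simp only [Matrix.of_apply, hw, Fin.val_zero, finRotate_succ_apply, Fin.val_add_one,
          Fin.val_last]
        split_ifs <;> first | rfl | omega | (congr 1; omega) | (exact absurd rfl ‹_›)
      · rw [Matrix.updateRow_ne hi]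
        simp only [Matrix.of_apply, hS, finRotate_succ_apply, Fin.val_add_one, if_neg hi]
        congr 1
        omega
    rw [hmat, det_rotate]
    rfl
  -- Dt1
  have hDt1 : (Matrix.of fun k j => w (t1.succAbove k) j).det = Hk c 0 (m+1) := by
    rw [det_unit_row _ (Fin.last (m+1)) (by
      intro j
      have hj := j.isLt
      simp only [Matrix.of_apply, hw, val_succAbove, hv1, Fin.val_last, Fin.ext_iff]
      try (split_ifs <;> first | rfl | omega | (exact absurd rfl ‹_›)))]
    rw [Fin.succAbove_last]
    have hmat : ((Matrix.of fun k j => w (t1.succAbove k) j).submatrix Fin.castSucc Fin.castSucc)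
        = Matrix.of (fun i j : Fin (m+1) => c (i.val + j.val + 0)) := by
      ext k j
      have hk := k.isLt
      have hj := j.isLt
      simp only [Matrix.submatrix_apply, Matrix.of_apply, hw, val_succAbove, hv1,
        Fin.coe_castSucc]
      try (split_ifs <;> first | rfl | omega | (congr 1; omega) | (exact absurd rfl ‹_›))
    rw [hmat]
    have hev : (-1:ℝ)^((m+1)+(m+1)) = 1 := by
      rw [show (m+1)+(m+1) = 2*(m+1) by ring, pow_mul]; norm_num
    simp only [Fin.val_last, hev, one_mul]
    rfl
  -- Et1
  have hEt1 : ((Matrix.of Sm).updateRow (Fin.last (m+1)) (w t1)).det = -Gk c 1 (m+1) := by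
    rw [det_unit_row _ km (by
      intro j
      have hj := j.isLt
      rw [Matrix.updateRow_self]
      simp only [hw, hv1, Fin.ext_iff, hvkm]
      try (split_ifs <;> first | rfl | omega | (exact absurd rfl ‹_›)))]
    have hmat : (((Matrix.of Sm).updateRow (Fin.last (m+1)) (w t1)).submatrix
        Fin.castSucc km.succAbove)
        = (Matrix.of fun i j : Fin (m+1) =>
            if i.val = (m+1) - 1 then c (1 + (m+1) + j.val) else c (i.val + j.val + 1))ᵀ := by
      ext k j
      have hk := k.isLt
      have hj := j.isLt
      rw [Matrix.submatrix_apply, Matrix.updateRow_ne (Fin.castSucc_lt_last k).ne]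
      simp only [Matrix.of_apply, Matrix.transpose_apply, hS, val_succAbove, hvkm,
        Fin.coe_castSucc]
      try (split_ifs <;> first | rfl | omega | (congr 1; omega) | (exact absurd rfl ‹_›))
    rw [hmat, Matrix.det_transpose]
    have hsgn : (-1:ℝ)^((m+1)+m) = -1 := by
      rw [show (m+1)+m = 2*m+1 by ring, pow_succ, pow_mul]; norm_num
    rw [hsgn]
    have hG : Gk c 1 (m+1) = (Matrix.of fun i j : Fin (m+1) =>
        if i.val = (m+1) - 1 then c (1 + (m+1) + j.val) else c (i.val + j.val + 1)).det := by
      unfold Gk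
      rw [if_neg (Nat.succ_ne_zero m)]
    rw [hG]
    ring
  -- Dt2
  have hDt2 : (Matrix.of fun k j => w (t2.succAbove k) j).det = -Gk c 0 (m+1) := by
    rw [det_unit_row _ km (by
      intro j
      have hj := j.isLt
      simp only [Matrix.of_apply, hw, val_succAbove, hv2, Fin.val_last, Fin.ext_iff, hvkm]
      try (split_ifs <;> first | rfl | omega | (exact absurd rfl ‹_›)))]
    have hmat : ((Matrix.of fun k j => w (t2.succAbove k) j).submatrix
        Fin.castSucc km.succAbove)
        = (Matrix.of fun i j : Fin (m+1) =>
            if i.val = (m+1) - 1 then c (0 + (m+1) + j.val) else c (i.val + j.val + 0))ᵀ := by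
      ext k j
      have hk := k.isLt
      have hj := j.isLt
      simp only [Matrix.submatrix_apply, Matrix.of_apply, Matrix.transpose_apply, hw,
        val_succAbove, hv2, hvkm, Fin.coe_castSucc]
      rw [if_pos (show (k:ℕ) < m+2 by omega), if_pos (show (k:ℕ) ≤ m by omega)]
      by_cases hc : (j:ℕ) < m
      · rw [if_pos hc, if_neg (by omega)]
        first | rfl | (congr 1 <;> omega)
      · rw [if_neg hc, if_pos (by omega)]
        first | rfl | (congr 1 <;> omega)
    rw [hmat, Matrix.det_transpose]
    have hsgn : (-1:ℝ)^((m+1)+m) = -1 := by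
      rw [show (m+1)+m = 2*m+1 by ring, pow_succ, pow_mul]; norm_num
    rw [hsgn]
    have hG : Gk c 0 (m+1) = (Matrix.of fun i j : Fin (m+1) =>
        if i.val = (m+1) - 1 then c (0 + (m+1) + j.val) else c (i.val + j.val + 0)).det := by
      unfold Gk
      rw [if_neg (Nat.succ_ne_zero m)]
    rw [hG]
    ring
  -- Et2
  have hEt2 : ((Matrix.of Sm).updateRow (Fin.last (m+1)) (w t2)).det = Hk c 1 (m+1) := by
    rw [det_unit_row _ (Fin.last (m+1)) (by
      intro j
      have hj := j.isLt
      rw [Matrix.updateRow_self]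
      simp only [hw, hv2, Fin.ext_iff, Fin.val_last]
      try (split_ifs <;> first | rfl | omega | (exact absurd rfl ‹_›)))]
    rw [Fin.succAbove_last]
    have hmat : (((Matrix.of Sm).updateRow (Fin.last (m+1)) (w t2)).submatrix
        Fin.castSucc Fin.castSucc)
        = Matrix.of (fun i j : Fin (m+1) => c (i.val + j.val + 1)) := by
      ext k j
      rw [Matrix.submatrix_apply, Matrix.updateRow_ne (Fin.castSucc_lt_last k).ne]
      simp only [Matrix.of_apply, hS, Fin.coe_castSucc]
      congr 1
      omega
    rw [hmat]
    have hev : (-1:ℝ)^((m+1)+(m+1)) = 1 := by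
      rw [show (m+1)+(m+1) = 2*(m+1) by ring, pow_mul]; norm_num
    simp only [Fin.val_last, hev, one_mul]
    rfl
  -- assemble
  have hf0 : f 0 = Hk c 1 m * ((-1:ℝ)^(m+1) * Hk c 0 (m+2)) := by
    simp only [hf, Fin.val_zero, pow_zero, one_mul, hD0, hE0]
  have hft1 : f t1 = (-1:ℝ)^(m+1) * (Hk c 0 (m+1) * -Gk c 1 (m+1)) := by
    simp only [hf, hDt1, hEt1, hv1, mul_assoc]
  have hft2 : f t2 = (-1:ℝ)^(m+2) * (-Gk c 0 (m+1) * Hk c 1 (m+1)) := by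
    simp only [hf, hDt2, hEt2, hv2, mul_assoc]
  have hfin : (-1:ℝ)^(m+1) * (Hk c 1 m * Hk c 0 (m+2) - Hk c 0 (m+1) * Gk c 1 (m+1)
      + Gk c 0 (m+1) * Hk c 1 (m+1)) = 0 := by
    rw [← hkey', hsplit, hf0, hft1, hft2]
    ring
  have hne : (-1:ℝ)^(m+1) ≠ 0 := pow_ne_zero _ (by norm_num)
  have hz := (mul_eq_zero.mp hfin).resolve_left hne
  linarith

lemma relB (c : ℕ → ℝ) (m : ℕ) :
    Gk c 0 (m+1) * Hk c 1 m - Gk c 1 m * Hk c 0 (m+1) = Hk c 0 m * Hk c 1 (m+1) := by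
  classical
  rcases m with _ | m
  · simp [Hk, Gk, Matrix.det_fin_one, Matrix.det_fin_zero]
  set w : Fin (m+3) → Fin (m+2) → ℝ := fun t i =>
    if (t:ℕ) ≤ m+1 then c ((i:ℕ) + (t:ℕ) + 1)
    else (if (i:ℕ) = m+1 then 1 else 0) with hw
  set Sm : Fin (m+2) → Fin (m+2) → ℝ := fun k i => c ((i:ℕ) + (k:ℕ)) with hS
  have hkey := key (m+1) w Sm
  set f : Fin (m+3) → ℝ := fun t =>
    (-1:ℝ)^(t:ℕ) * (Matrix.of fun k j => w (t.succAbove k) j).det *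
      ((Matrix.of Sm).updateRow (Fin.last (m+1)) (w t)).det with hf
  have hkey' : ∑ t : Fin (m+3), f t = 0 := hkey
  obtain ⟨t0, hv0⟩ : ∃ x : Fin (m+3), (x:ℕ) = m := ⟨⟨m, by omega⟩, rfl⟩
  obtain ⟨t1, hv1⟩ : ∃ x : Fin (m+3), (x:ℕ) = m+1 := ⟨⟨m+1, by omega⟩, rfl⟩
  obtain ⟨t2, hv2⟩ : ∃ x : Fin (m+3), (x:ℕ) = m+2 := ⟨⟨m+2, by omega⟩, rfl⟩
  have hvan : ∀ t : Fin (m+3), t ∉ ({t0, t1, t2} : Finset (Fin (m+3))) → f t = 0 := by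
    intro t ht
    simp only [Finset.mem_insert, Finset.mem_singleton] at ht
    push_neg at ht
    have hval : (t:ℕ) ≠ m ∧ (t:ℕ) ≠ m+1 ∧ (t:ℕ) ≠ m+2 := by
      refine ⟨fun h => ht.1 ?_, fun h => ht.2.1 ?_, fun h => ht.2.2 ?_⟩ <;>
        exact Fin.ext (by omega)
    have h2 : (t:ℕ) < m := by have := t.isLt; omega
    have hE : ((Matrix.of Sm).updateRow (Fin.last (m+1)) (w t)).det = 0 := by
      have hne : (⟨(t:ℕ)+1, by omega⟩ : Fin (m+2)) ≠ Fin.last (m+1) :=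
        Fin.ne_of_val_ne (by simp [Fin.val_last]; omega)
      have hrow : ((Matrix.of Sm).updateRow (Fin.last (m+1)) (w t))
          (⟨(t:ℕ)+1, by omega⟩ : Fin (m+2))
          = ((Matrix.of Sm).updateRow (Fin.last (m+1)) (w t)) (Fin.last (m+1)) := by
        rw [Matrix.updateRow_ne hne, Matrix.updateRow_self]
        funext j
        simp only [Matrix.of_apply, hS, hw, if_pos (show (t:ℕ) ≤ m+1 by omega)]
        congr 1
      exact Matrix.det_zero_of_row_eq hne hrow
    rw [hf]
    simp only [hE, mul_zero]
  have hsplit : ∑ t : Fin (m+3), f t = f t0 + f t1 + f t2 := by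
    rw [← Finset.sum_subset (Finset.subset_univ ({t0, t1, t2} : Finset (Fin (m+3))))
      (fun t _ ht => hvan t ht)]
    have hm1 : t0 ∉ ({t1, t2} : Finset (Fin (m+3))) := by
      simp only [Finset.mem_insert, Finset.mem_singleton, not_or, Fin.ext_iff]
      omega
    have hm2 : t1 ∉ ({t2} : Finset (Fin (m+3))) := by
      simp only [Finset.mem_singleton, Fin.ext_iff]
      omega
    rw [Finset.sum_insert hm1, Finset.sum_insert hm2, Finset.sum_singleton]
    ring
  -- Dt0 = Gk c 1 (m+1)
  have hDt0 : (Matrix.of fun k j => w (t0.succAbove k) j).det = Gk c 1 (m+1) := by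
    rw [det_unit_row _ (Fin.last (m+1)) (by
      intro j
      have hj := j.isLt
      simp only [Matrix.of_apply, hw, val_succAbove, hv0, Fin.val_last, Fin.ext_iff]
      try (split_ifs <;> first | rfl | omega | (exact absurd rfl ‹_›)))]
    rw [Fin.succAbove_last]
    have hmat : ((Matrix.of fun k j => w (t0.succAbove k) j).submatrix
        Fin.castSucc Fin.castSucc)
        = Matrix.of (fun i j : Fin (m+1) =>
            if i.val = (m+1) - 1 then c (1 + (m+1) + j.val) else c (i.val + j.val + 1)) := by
      ext k j
      have hk := k.isLt
      have hj := j.isLt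
      simp only [Matrix.submatrix_apply, Matrix.of_apply, hw, val_succAbove, hv0,
        Fin.coe_castSucc]
      by_cases hc : (k:ℕ) < m
      · rw [if_pos hc, if_pos (by omega), if_neg (by omega)]
        first | rfl | (congr 1 <;> omega)
      · rw [if_neg hc, if_pos (by omega), if_pos (by omega)]
        first | rfl | (congr 1 <;> omega)
    rw [hmat]
    have hG : Gk c 1 (m+1) = (Matrix.of fun i j : Fin (m+1) =>
        if i.val = (m+1) - 1 then c (1 + (m+1) + j.val) else c (i.val + j.val + 1)).det := by
      unfold Gk
      rw [if_neg (Nat.succ_ne_zero m)]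
    rw [hG]
    have hev : (-1:ℝ)^((m+1)+(m+1)) = 1 := by
      rw [show (m+1)+(m+1) = 2*(m+1) by ring, pow_mul]; norm_num
    rw [Fin.val_last, hev, one_mul]
  -- Et0 = Hk c 0 (m+2)
  have hEt0 : ((Matrix.of Sm).updateRow (Fin.last (m+1)) (w t0)).det = Hk c 0 (m+2) := by
    have hmat : (Matrix.of Sm).updateRow (Fin.last (m+1)) (w t0)
        = Matrix.of (fun i j : Fin (m+2) => c (i.val + j.val + 0)) := by
      ext i j
      by_cases hi : i = Fin.last (m+1)
      · subst hi
        rw [Matrix.updateRow_self]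
        simp only [Matrix.of_apply, hw, hv0, if_pos (show m ≤ m+1 by omega), Fin.val_last]
        congr 1
        omega
      · rw [Matrix.updateRow_ne hi]
        simp only [Matrix.of_apply, hS]
        congr 1
        omega
    rw [hmat]
    rfl
  -- Dt1 = Hk c 1 (m+1)
  have hDt1 : (Matrix.of fun k j => w (t1.succAbove k) j).det = Hk c 1 (m+1) := by
    rw [det_unit_row _ (Fin.last (m+1)) (by
      intro j
      have hj := j.isLt
      simp only [Matrix.of_apply, hw, val_succAbove, hv1, Fin.val_last, Fin.ext_iff]
      try (split_ifs <;> first | rfl | omega | (exact absurd rfl ‹_›)))]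
    rw [Fin.succAbove_last]
    have hmat : ((Matrix.of fun k j => w (t1.succAbove k) j).submatrix
        Fin.castSucc Fin.castSucc)
        = Matrix.of (fun i j : Fin (m+1) => c (i.val + j.val + 1)) := by
      ext k j
      have hk := k.isLt
      have hj := j.isLt
      simp only [Matrix.submatrix_apply, Matrix.of_apply, hw, val_succAbove, hv1,
        Fin.coe_castSucc]
      rw [if_pos (show (k:ℕ) < m+1 by omega), if_pos (show (k:ℕ) ≤ m+1 by omega)]
      first | rfl | (congr 1 <;> omega)
    rw [hmat]
    have hev : (-1:ℝ)^((m+1)+(m+1)) = 1 := by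
      rw [show (m+1)+(m+1) = 2*(m+1) by ring, pow_mul]; norm_num
    rw [Fin.val_last, hev, one_mul]
    rfl
  -- Et1 = Gk c 0 (m+2)
  have hEt1 : ((Matrix.of Sm).updateRow (Fin.last (m+1)) (w t1)).det = Gk c 0 (m+2) := by
    have hmat : (Matrix.of Sm).updateRow (Fin.last (m+1)) (w t1)
        = Matrix.of (fun i j : Fin (m+2) =>
            if i.val = (m+2) - 1 then c (0 + (m+2) + j.val) else c (i.val + j.val + 0)) := by
      ext i j
      by_cases hi : i = Fin.last (m+1)
      · subst hi
        rw [Matrix.updateRow_self]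
        simp only [Matrix.of_apply, hw, hv1, if_pos (show m+1 ≤ m+1 by omega), Fin.val_last]
        rw [if_pos (by omega)]
        congr 1
        omega
      · rw [Matrix.updateRow_ne hi]
        have hi' : (i:ℕ) ≠ m+1 := fun h => hi (Fin.ext (by simp [Fin.val_last, h]))
        simp only [Matrix.of_apply, hS]
        rw [if_neg (by omega)]
        congr 1
        omega
    rw [hmat]
    have hG : Gk c 0 (m+2) = (Matrix.of fun i j : Fin (m+2) =>
        if i.val = (m+2) - 1 then c (0 + (m+2) + j.val) else c (i.val + j.val + 0)).det := by
      unfold Gk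
      rw [if_neg (by omega)]
    rw [hG]
  -- Dt2 = Hk c 1 (m+2)
  have hDt2 : (Matrix.of fun k j => w (t2.succAbove k) j).det = Hk c 1 (m+2) := by
    have hmat : (Matrix.of fun k j => w (t2.succAbove k) j)
        = Matrix.of (fun i j : Fin (m+2) => c (i.val + j.val + 1)) := by
      ext k j
      have hk := k.isLt
      simp only [Matrix.of_apply, hw, val_succAbove, hv2]
      rw [if_pos (show (k:ℕ) < m+2 by omega), if_pos (show (k:ℕ) ≤ m+1 by omega)]
      first | rfl | (congr 1 <;> omega)
    rw [hmat]
    rfl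
  -- Et2 = Hk c 0 (m+1)
  have hEt2 : ((Matrix.of Sm).updateRow (Fin.last (m+1)) (w t2)).det = Hk c 0 (m+1) := by
    rw [det_unit_row _ (Fin.last (m+1)) (by
      intro j
      have hj := j.isLt
      rw [Matrix.updateRow_self]
      simp only [hw, hv2, Fin.ext_iff, Fin.val_last]
      try (split_ifs <;> first | rfl | omega | (exact absurd rfl ‹_›)))]
    rw [Fin.succAbove_last]
    have hmat : (((Matrix.of Sm).updateRow (Fin.last (m+1)) (w t2)).submatrix
        Fin.castSucc Fin.castSucc)
        = Matrix.of (fun i j : Fin (m+1) => c (i.val + j.val + 0)) := by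
      ext k j
      rw [Matrix.submatrix_apply, Matrix.updateRow_ne (Fin.castSucc_lt_last k).ne]
      simp only [Matrix.of_apply, hS, Fin.coe_castSucc]
      congr 1
      omega
    rw [hmat]
    have hev : (-1:ℝ)^((m+1)+(m+1)) = 1 := by
      rw [show (m+1)+(m+1) = 2*(m+1) by ring, pow_mul]; norm_num
    rw [Fin.val_last, hev, one_mul]
    rfl
  -- assemble
  have hft0 : f t0 = (-1:ℝ)^m * (Gk c 1 (m+1) * Hk c 0 (m+2)) := by
    simp only [hf, hv0, hDt0, hEt0, mul_assoc]
  have hft1 : f t1 = (-1:ℝ)^(m+1) * (Hk c 1 (m+1) * Gk c 0 (m+2)) := by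
    simp only [hf, hv1, hDt1, hEt1, mul_assoc]
  have hft2 : f t2 = (-1:ℝ)^(m+2) * (Hk c 1 (m+2) * Hk c 0 (m+1)) := by
    simp only [hf, hv2, hDt2, hEt2, mul_assoc]
  have hfin : (-1:ℝ)^m * (Gk c 1 (m+1) * Hk c 0 (m+2) - Hk c 1 (m+1) * Gk c 0 (m+2)
      + Hk c 1 (m+2) * Hk c 0 (m+1)) = 0 := by
    rw [← hkey', hsplit, hft0, hft1, hft2]
    ring
  have hne : (-1:ℝ)^m ≠ 0 := pow_ne_zero _ (by norm_num)
  have hz := (mul_eq_zero.mp hfin).resolve_left hne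
  linarith

/-- Telescoping identity: with `u_{2n-1} = H⁰_{n-1}H¹_n/(H⁰_n H¹_{n-1})`,
`u_{2n} = H⁰_{n+1}H¹_{n-1}/(H⁰_n H¹_n)` for `n ≥ 1`, and `u 0 = u₀`,
one has `G^m_n/H^m_n − G^m_{n-1}/H^m_{n-1} = u_{2n-2+m} + u_{2n-1+m}`
for `m ∈ {0,1}`, `n ≥ 1`. -/
theorem telescoping_G_over_H (c : ℕ → ℝ) (u₀ : ℝ) (u : ℕ → ℝ)
    (hH : ∀ m n : ℕ, m = 0 ∨ m = 1 → Hk c m n ≠ 0)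
    (hu0 : u 0 = u₀)
    (huodd : ∀ n : ℕ, 1 ≤ n →
      u (2 * n - 1) = Hk c 0 (n - 1) * Hk c 1 n / (Hk c 0 n * Hk c 1 (n - 1)))
    (hueven : ∀ n : ℕ, 1 ≤ n →
      u (2 * n) = Hk c 0 (n + 1) * Hk c 1 (n - 1) / (Hk c 0 n * Hk c 1 n))
    (m : ℕ) (hm : m = 0 ∨ m = 1) (n : ℕ) (hn : 1 ≤ n) :
    Gext c u₀ m n / Hk c m n - Gext c u₀ m (n - 1) / Hk c m (n - 1) =
      u (2 * n - 2 + m) + u (2 * n - 1 + m) := by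
  have hH0 : ∀ k, Hk c 0 k ≠ 0 := fun k => hH 0 k (Or.inl rfl)
  have hH1 : ∀ k, Hk c 1 k ≠ 0 := fun k => hH 1 k (Or.inr rfl)
  have stepB : ∀ k : ℕ, Gk c 0 (k+1) / Hk c 0 (k+1) - Gk c 1 k / Hk c 1 k
      = Hk c 0 k * Hk c 1 (k+1) / (Hk c 0 (k+1) * Hk c 1 k) := by
    intro k
    rw [div_sub_div _ _ (hH0 (k+1)) (hH1 k),
      div_eq_div_iff (mul_ne_zero (hH0 (k+1)) (hH1 k)) (mul_ne_zero (hH0 (k+1)) (hH1 k))]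
    linear_combination (Hk c 0 (k+1) * Hk c 1 k) * relB c k
  have stepA : ∀ k : ℕ, Gk c 1 (k+1) / Hk c 1 (k+1) - Gk c 0 (k+1) / Hk c 0 (k+1)
      = Hk c 0 (k+2) * Hk c 1 k / (Hk c 0 (k+1) * Hk c 1 (k+1)) := by
    intro k
    rw [div_sub_div _ _ (hH1 (k+1)) (hH0 (k+1)),
      div_eq_div_iff (mul_ne_zero (hH1 (k+1)) (hH0 (k+1)))
        (mul_ne_zero (hH0 (k+1)) (hH1 (k+1)))]
    linear_combination (Hk c 1 (k+1) * Hk c 0 (k+1)) * relA c k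
  have hGext1 : ∀ k : ℕ, Gext c u₀ 1 k = Gk c 1 k := by
    intro k
    rcases k with _ | k
    · simp [Gext, Gk]
    · simp [Gext]
  obtain ⟨k, rfl⟩ : ∃ k, n = k+1 := ⟨n-1, by omega⟩
  rcases hm with rfl | rfl
  · -- m = 0
    rcases k with _ | k
    · -- n = 1
      have h00 : Hk c 0 0 = 1 := by simp [Hk]
      have h01 : Hk c 0 1 = c 0 := by simp [Hk, Matrix.det_fin_one]
      have h10 : Hk c 1 0 = 1 := by simp [Hk]
      have h11 : Hk c 1 1 = c 1 := by simp [Hk, Matrix.det_fin_one]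
      have hGe1 : Gext c u₀ 0 1 = c 1 := by simp [Gext, Gk, Matrix.det_fin_one]
      have hGe0 : Gext c u₀ 0 0 = -u₀ := by simp [Gext]
      have hu1 := huodd 1 le_rfl
      norm_num at hu1 ⊢
      rw [hu0, hu1, hGe1, hGe0, h01, h00, h11, h10]
      field_simp
      ring
    · -- n = k+2
      have e1 : 2 * (k+1+1) - 2 + 0 = 2*(k+1) := by omega
      have e2 : 2 * (k+1+1) - 1 + 0 = 2*(k+2) - 1 := by omega
      have hue := hueven (k+1) (by omega)
      have huo := huodd (k+2) (by omega)
      simp only [Nat.add_sub_cancel] at hue huo ⊢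
      rw [e1, e2, hue, huo]
      have hGa : Gext c u₀ 0 (k+1+1) = Gk c 0 (k+2) := by simp [Gext]
      have hGb : Gext c u₀ 0 (k+1) = Gk c 0 (k+1) := by simp [Gext]
      rw [hGa, hGb]
      have s1 := stepB (k+1)
      have s2 := stepA k
      have hx1 : k+1+1 = k+2 := rfl
      have hx2 : k+2-1 = k+1 := rfl
      simp only [hx1, hx2] at huo hue s1 s2 ⊢
      linarith [s1, s2]
  · -- m = 1
    have e1 : 2 * (k+1) - 2 + 1 = 2*(k+1) - 1 := by omega
    have e2 : 2 * (k+1) - 1 + 1 = 2*(k+1) := by omega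
    have huo := huodd (k+1) (by omega)
    have hue := hueven (k+1) (by omega)
    simp only [Nat.add_sub_cancel] at huo hue ⊢
    rw [e1, e2, huo, hue, hGext1, hGext1]
    have s1 := stepB k
    have s2 := stepA k
    linarith [s1, s2]
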